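/- Let G = G³(n,p) and let s ≤ n, r ≤ C(n,2), i ≤ n be positive integers. The probability that there exist a vertex v ∈ [n] and a set S ⊆ [n] with v ∉ S and |S| = s, together with more than r pairs {y,z} of distinct vertices in [n]\S such that vyz ∈ G and d_S(y,z) ≥ i, is at most g(p,s,r,i) = n·C(n,s)·C(n²,r)·(p·C(s,i)·pⁱ)ʳ. -/

import Mathlib

open Finset MeasureTheory Filter

attribute [local instance] Classical.propDecidable

set_option maxHeartbeats 1000000

/-- A potential hyperedge: a 3-element subset of the vertex set `Fin n`. -/
abbrev Edge (n : ℕ) := {e : Finset (Fin n) // e.card = 3}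

/-- Bernoulli measure on `Bool` with parameter `p`. -/
noncomputable def bern (p : ℝ) : Measure Bool :=
  (Real.toNNReal p) • Measure.dirac true + (Real.toNNReal (1 - p)) • Measure.dirac false

/-- The law of the random 3-uniform hypergraph `G³(n,p)`: each triple is present
independently with probability `p`. A sample point `ω : Edge n → Bool` records which
triples are hyperedges. -/
noncomputable def hypM (n : ℕ) (p : ℝ) : Measure (Edge n → Bool) :=
  Measure.pi fun _ => bern p

/-- The set of hyperedges of the sampled hypergraph. -/
noncomputable def hedges {n : ℕ} (ω : Edge n → Bool) : Finset (Edge n) :=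
  Finset.univ.filter fun e => ω e = true

/-- The triple `s` is a hyperedge of the hypergraph `H`. -/
def memH {n : ℕ} (H : Finset (Edge n)) (s : Finset (Fin n)) : Prop :=
  ∃ e ∈ H, (e : Finset (Fin n)) = s

/-- `H` contains no copy of `F₅`, the hypergraph on `{1,...,5}` with edges
`{123, 124, 345}`. -/
def F5Free {n : ℕ} (H : Finset (Edge n)) : Prop :=
  ¬ ∃ f : Fin 5 → Fin n, Function.Injective f ∧
      memH H {f 0, f 1, f 2} ∧ memH H {f 0, f 1, f 3} ∧ memH H {f 2, f 3, f 4}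

/-- `H` is tripartite: the vertex set can be partitioned into three parts such that
every hyperedge has exactly one vertex in each part. -/
def Tripartite {n : ℕ} (H : Finset (Edge n)) : Prop :=
  ∃ V : Fin 3 → Finset (Fin n),
    (∀ v : Fin n, ∃! i : Fin 3, v ∈ V i) ∧
    ∀ e ∈ H, ∀ i : Fin 3, ((e : Finset (Fin n)) ∩ V i).card = 1

/-- `(V₁, V₂, V₃)` is a 3-partition of the vertex set. -/
def IsPartition3 {n : ℕ} (V₁ V₂ V₃ : Finset (Fin n)) : Prop :=
  Disjoint V₁ V₂ ∧ Disjoint V₁ V₃ ∧ Disjoint V₂ V₃ ∧ V₁ ∪ V₂ ∪ V₃ = Finset.univ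

/-- A balanced 3-partition: every part has size `(1 ± 10⁻¹⁰) n / 3`. -/
def Balanced3 {n : ℕ} (V₁ V₂ V₃ : Finset (Fin n)) : Prop :=
  IsPartition3 V₁ V₂ V₃ ∧
    ∀ V ∈ [V₁, V₂, V₃],
      (1 - 1e-10 : ℝ) * n / 3 ≤ (V.card : ℝ) ∧ (V.card : ℝ) ≤ (1 + 1e-10 : ℝ) * n / 3

/-- The crossing hyperedges of `H` w.r.t. `(V₁,V₂,V₃)`: those with exactly one vertex
in each part (i.e. `H ∩ K_π`). -/
noncomputable def crossing {n : ℕ} (V₁ V₂ V₃ : Finset (Fin n)) (H : Finset (Edge n)) :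
    Finset (Edge n) :=
  H.filter fun e => ((e : Finset (Fin n)) ∩ V₁).card = 1 ∧
    ((e : Finset (Fin n)) ∩ V₂).card = 1 ∧ ((e : Finset (Fin n)) ∩ V₃).card = 1

/-- The missing crossing hyperedges `H̄_π = G_π \ H_π`. -/
noncomputable def Hbar {n : ℕ} (ω : Edge n → Bool) (V₁ V₂ V₃ : Finset (Fin n))
    (H : Finset (Edge n)) : Finset (Edge n) :=
  crossing V₁ V₂ V₃ (hedges ω) \ crossing V₁ V₂ V₃ H

/-- `H_i`: the hyperedges of `H` with at least two vertices in the part `V`. -/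
noncomputable def bigPart {n : ℕ} (V : Finset (Fin n)) (H : Finset (Edge n)) :
    Finset (Edge n) :=
  H.filter fun e => 2 ≤ ((e : Finset (Fin n)) ∩ V).card

/-- `(V₁,V₂,V₃)` is a 3-partition maximizing the number `|H_π|` of crossing
hyperedges of `H`. -/
def MaximizesCrossing {n : ℕ} (H : Finset (Edge n)) (V₁ V₂ V₃ : Finset (Fin n)) : Prop :=
  IsPartition3 V₁ V₂ V₃ ∧ ∀ W₁ W₂ W₃ : Finset (Fin n), IsPartition3 W₁ W₂ W₃ →
    (crossing W₁ W₂ W₃ H).card ≤ (crossing V₁ V₂ V₃ H).card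

/-- The edge set of the shadow graph of `H`: pairs `{x,y}` contained in some
hyperedge of `H`. -/
noncomputable def shadowE {n : ℕ} (H : Finset (Edge n)) : Finset (Finset (Fin n)) :=
  (Finset.powersetCard 2 (Finset.univ : Finset (Fin n))).filter fun s =>
    ∃ e ∈ H, s ⊆ (e : Finset (Fin n))

/-- `J`: the induced subgraph on `V₁` of the shadow graph of `H₁`. -/
noncomputable def Jgraph {n : ℕ} (V₁ : Finset (Fin n)) (H : Finset (Edge n)) :
    Finset (Finset (Fin n)) :=
  (shadowE (bigPart V₁ H)).filter fun s => s ⊆ V₁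

/-- Degree of the vertex `x` in a graph given as a finset of (2-element) edges. -/
noncomputable def degIn {n : ℕ} (J : Finset (Finset (Fin n))) (x : Fin n) : ℕ :=
  (J.filter fun s => x ∈ s).card

/-- `d^H_{2,3}(x)`: the number of pairs `(y,z) ∈ V₂ × V₃` with `xyz ∈ H`. -/
noncomputable def d23 {n : ℕ} (H : Finset (Edge n)) (V₂ V₃ : Finset (Fin n)) (x : Fin n) : ℕ :=
  ((V₂ ×ˢ V₃).filter fun q => memH H {x, q.1, q.2}).card

/-- `d_S(x,y)`: the number of vertices `z ∈ S` with `xyz ∈ H`. -/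
noncomputable def codeg {n : ℕ} (H : Finset (Edge n)) (S : Finset (Fin n)) (x y : Fin n) : ℕ :=
  (S.filter fun z => memH H {x, y, z}).card

/-- `L_{2,3}(x,y)`: pairs `(y',z') ∈ V₂ × V₃` such that both `xy'z'` and `yy'z'`
are hyperedges of the sampled hypergraph. -/
noncomputable def L23 {n : ℕ} (ω : Edge n → Bool) (V₂ V₃ : Finset (Fin n)) (x y : Fin n) :
    Finset (Fin n × Fin n) :=
  (V₂ ×ˢ V₃).filter fun q =>
    memH (hedges ω) {x, q.1, q.2} ∧ memH (hedges ω) {y, q.1, q.2}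

/-- `Q(π)`: the pairs `{x,y} ⊆ V₁` with `|L_{2,3}(x,y)| < 0.8 p² n² / 9`. -/
noncomputable def Qset {n : ℕ} (ω : Edge n → Bool) (p : ℝ) (V₁ V₂ V₃ : Finset (Fin n)) :
    Finset (Finset (Fin n)) :=
  (Finset.powersetCard 2 V₁).filter fun s =>
    ∃ x ∈ s, ∃ y ∈ s, x ≠ y ∧
      ((L23 ω V₂ V₃ x y).card : ℝ) < 0.8 * p ^ 2 * (n : ℝ) ^ 2 / 9

/-- The degree `d(v)` of a vertex: the number of hyperedges containing `v`. -/
noncomputable def vdeg {n : ℕ} (ω : Edge n → Bool) (v : Fin n) : ℕ :=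
  ((hedges ω).filter fun e => v ∈ (e : Finset (Fin n))).card

/-- `t(G)`: the number of hyperedges of a maximum tripartite subhypergraph of `G`. -/
noncomputable def tG {n : ℕ} (ω : Edge n → Bool) : ℕ :=
  (((hedges ω).powerset).filter fun H => Tripartite H).sup Finset.card

/-- `G(v,E,A,T) = K(v,E,A,T) ∩ G` where
`K(v,E,A,T) = {xyz : x ∈ A, {y,z} ∈ T, ∃ e ∈ E, x ∈ e, y ∉ e, z ∉ e}`. -/
noncomputable def GvEAT {n : ℕ} (ω : Edge n → Bool) (A : Finset (Fin n))
    (T : Finset (Finset (Fin n))) (E : Finset (Edge n)) : Finset (Edge n) :=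
  (hedges ω).filter fun f => ∃ x ∈ A, ∃ t ∈ T, (f : Finset (Fin n)) = insert x t ∧
    ∃ e ∈ E, x ∈ (e : Finset (Fin n)) ∧ ∀ z ∈ t, z ∉ (e : Finset (Fin n))

/-- `{w₁, w₂, y, z}` spans an `F̂₅` (w.r.t. `H` and the partition `(V₁,V₂,V₃)`):
`w₁yz, w₂yz ∈ G_π` and there exists `e ∈ H` with `w₁, w₂ ∈ e ∩ V₁` and `y, z ∉ e`. -/
def F5hat {n : ℕ} (ω : Edge n → Bool) (H : Finset (Edge n)) (V₁ V₂ V₃ : Finset (Fin n))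
    (w₁ w₂ y z : Fin n) : Prop :=
  memH (crossing V₁ V₂ V₃ (hedges ω)) {w₁, y, z} ∧
  memH (crossing V₁ V₂ V₃ (hedges ω)) {w₂, y, z} ∧
  ∃ e ∈ H, w₁ ∈ (e : Finset (Fin n)) ∧ w₂ ∈ (e : Finset (Fin n)) ∧
    w₁ ∈ V₁ ∧ w₂ ∈ V₁ ∧ y ∉ (e : Finset (Fin n)) ∧ z ∉ (e : Finset (Fin n))

/-- `g(p,s,r,i) = n · C(n,s) · C(n²,r) · (p · C(s,i) · pⁱ)ʳ`. -/
noncomputable def gbound (n : ℕ) (p : ℝ) (s r i : ℕ) : ℝ :=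
  (n : ℝ) * (n.choose s) * ((n ^ 2).choose r) * (p * (s.choose i) * p ^ i) ^ r

lemma bern_apply (p : ℝ) (A : Set Bool) :
    bern p A = (Real.toNNReal p) * A.indicator 1 true + (Real.toNNReal (1-p)) * A.indicator 1 false := by
  simp [bern, Measure.dirac_apply, -Measure.coe_nnreal_smul, ENNReal.smul_def]

lemma bern_true (p : ℝ) : bern p {true} = ENNReal.ofReal p := by
  rw [bern_apply]
  simp [Set.indicator, ENNReal.ofReal]

lemma bern_univ (p : ℝ) (hp0 : 0 ≤ p) (hp1 : p ≤ 1) : bern p Set.univ = 1 := by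
  rw [bern_apply]
  simp only [Set.indicator_univ, Pi.one_apply, mul_one]
  rw [← ENNReal.ofReal, ← ENNReal.ofReal, ← ENNReal.ofReal_add hp0 (by linarith)]
  norm_num

instance bern_fin (p : ℝ) : IsFiniteMeasure (bern p) := by
  constructor
  rw [bern_apply]
  simp only [Set.indicator_univ, Pi.one_apply, mul_one]
  exact ENNReal.add_lt_top.mpr ⟨ENNReal.coe_lt_top, ENNReal.coe_lt_top⟩


noncomputable def cylF {n : ℕ} (v : Fin n) (R : Finset (Finset (Fin n)))
    (I : Finset (Fin n) → Finset (Fin n)) : Finset (Finset (Fin n)) :=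
  R.image (fun t => insert v t) ∪ R.biUnion (fun t => (I t).image (fun x => insert x t))

lemma card_three {n : ℕ} {v : Fin n} {S : Finset (Fin n)} {R : Finset (Finset (Fin n))}
    {I : Finset (Fin n) → Finset (Fin n)}
    (hvS : v ∉ S)
    (hR : ∀ t ∈ R, t.card = 2 ∧ v ∉ t ∧ ∀ a ∈ t, a ∉ S)
    (hI : ∀ t ∈ R, I t ⊆ S) :
    ∀ a ∈ cylF v R I, a.card = 3 := by
  intro a ha
  rw [cylF, Finset.mem_union] at ha
  rcases ha with ha | ha
  · obtain ⟨t, ht, rfl⟩ := Finset.mem_image.mp ha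
    obtain ⟨h2, hv, -⟩ := hR t ht
    rw [Finset.card_insert_of_notMem hv, h2]
  · obtain ⟨t, ht, hx⟩ := Finset.mem_biUnion.mp ha
    obtain ⟨x, hxI, rfl⟩ := Finset.mem_image.mp hx
    obtain ⟨h2, -, hts⟩ := hR t ht
    have : x ∉ t := fun hxt => hts x hxt (hI t ht hxI)
    rw [Finset.card_insert_of_notMem this, h2]

lemma card_cylF {n : ℕ} {v : Fin n} {S : Finset (Fin n)} {R : Finset (Finset (Fin n))}
    {I : Finset (Fin n) → Finset (Fin n)} {r i : ℕ}
    (hvS : v ∉ S)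
    (hR : ∀ t ∈ R, t.card = 2 ∧ v ∉ t ∧ ∀ a ∈ t, a ∉ S)
    (hI : ∀ t ∈ R, I t ⊆ S ∧ (I t).card = i)
    (hRc : R.card = r) :
    (cylF v R I).card = r + r * i := by
  have hdisjS : ∀ t ∈ R, ∀ x ∈ S, insert x t \ S = t := by
    intro t ht x hx
    ext a
    simp only [Finset.mem_sdiff, Finset.mem_insert]
    constructor
    · rintro ⟨ha | ha, hna⟩
      · exact absurd (ha ▸ hx) hna
      · exact ha
    · intro ha
      exact ⟨Or.inr ha, (hR t ht).2.2 a ha⟩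
  rw [cylF, Finset.card_union_of_disjoint, Finset.card_image_of_injOn, hRc,
    Finset.card_biUnion]
  · congr 1
    rw [← hRc, Finset.card_eq_sum_ones R, Finset.sum_mul, one_mul]
    apply Finset.sum_congr rfl
    intro t ht
    rw [Finset.card_image_of_injOn, (hI t ht).2]
    intro x hx y hy hxy
    -- insert x t = insert y t, x y ∈ S
    have hxS := (hI t ht).1 hx
    have hyS := (hI t ht).1 hy
    have : y ∈ insert x t := by rw [show insert x t = insert y t from hxy]; exact Finset.mem_insert_self y t
    rcases Finset.mem_insert.mp this with h | h
    · exact h.symm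
    · exact absurd hyS ((hR t ht).2.2 y h)
  · -- pairwise disjoint images
    intro t ht t' ht' htt'
    simp only [Finset.disjoint_left]
    intro a hat hat'
    obtain ⟨x, hx, rfl⟩ := Finset.mem_image.mp hat
    obtain ⟨x', hx', he⟩ := Finset.mem_image.mp hat'
    apply htt'
    have h1 := hdisjS t ht x ((hI t ht).1 hx)
    have h2 := hdisjS t' ht' x' ((hI t' ht').1 hx')
    rw [← h1, ← h2, he]
  · -- injOn of insert v
    intro t ht t' ht' h
    have := congrArg (Finset.erase · v) h
    simpa [Finset.erase_insert (hR t ht).2.1, Finset.erase_insert (hR t' ht').2.1] using this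
  · -- disjoint A B
    rw [Finset.disjoint_left]
    intro a ha hb
    obtain ⟨t, ht, rfl⟩ := Finset.mem_image.mp ha
    obtain ⟨t', ht', hx⟩ := Finset.mem_biUnion.mp hb
    obtain ⟨x, hxI, he⟩ := Finset.mem_image.mp hx
    have hxS := (hI t' ht').1 hxI
    have : x ∈ insert v t := he ▸ Finset.mem_insert_self x t'
    rcases Finset.mem_insert.mp this with h | h
    · exact hvS (h ▸ hxS)
    · exact (hR t ht).2.2 x h hxS

lemma card_filter_edge {n : ℕ} (F : Finset (Finset (Fin n)))
    (h3 : ∀ a ∈ F, a.card = 3) :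
    (Finset.univ.filter (fun e : Edge n => (e : Finset (Fin n)) ∈ F)).card = F.card := by
  apply Finset.card_bij (fun (e : Edge n) _ => (e : Finset (Fin n)))
  · intro e he; exact (Finset.mem_filter.mp he).2
  · intro e he e' he' h
    exact Subtype.ext h
  · intro a ha
    exact ⟨⟨a, h3 a ha⟩, Finset.mem_filter.mpr ⟨Finset.mem_univ _, ha⟩, rfl⟩


def cylEvent {n : ℕ} (F : Finset (Finset (Fin n))) : Set (Edge n → Bool) :=
  {ω | ∀ e : Edge n, (e : Finset (Fin n)) ∈ F → ω e = true}

lemma cyl_meas (n : ℕ) (p : ℝ) (hp0 : 0 ≤ p) (hp1 : p ≤ 1) (F : Finset (Finset (Fin n))) :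
    hypM n p (cylEvent F) =
      ENNReal.ofReal p ^ (Finset.univ.filter (fun e : Edge n => (e : Finset (Fin n)) ∈ F)).card := by
  have hset : cylEvent F =
      Set.pi Set.univ (fun e : Edge n => if (e : Finset (Fin n)) ∈ F then {true} else Set.univ) := by
    ext ω
    simp only [cylEvent, Set.mem_setOf_eq, Set.mem_pi, Set.mem_univ, forall_true_left]
    constructor
    · intro h e
      split_ifs with he
      · simpa using h e he
      · trivial
    · intro h e he
      have := h e
      rw [if_pos he] at this
      simpa using this
  rw [hset, hypM, Measure.pi_pi]
  have : ∀ e : Edge n,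
      bern p (if (e : Finset (Fin n)) ∈ F then ({true} : Set Bool) else Set.univ)
        = if e ∈ Finset.univ.filter (fun e : Edge n => (e : Finset (Fin n)) ∈ F)
            then ENNReal.ofReal p else 1 := by
    intro e
    by_cases he : (e : Finset (Fin n)) ∈ F
    · simp [he, bern_true]
    · rw [if_neg he, if_neg (by simp [he]), bern_univ p hp0 hp1]
  rw [Finset.prod_congr rfl (fun e _ => this e), Finset.prod_ite_mem, Finset.univ_inter,
    Finset.prod_const]


section Incl
variable {n : ℕ}

lemma incl (p : ℝ) (s r i : ℕ) :
    {ω : Edge n → Bool | ∃ v : Fin n, ∃ S : Finset (Fin n),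
        v ∉ S ∧ S.card = s ∧
        r < ((Finset.powersetCard 2 (Finset.univ \ S)).filter fun t =>
              memH (hedges ω) (insert v t) ∧
              ∃ y ∈ t, ∃ z ∈ t, y ≠ z ∧ i ≤ codeg (hedges ω) S y z).card}
    ⊆ ⋃ v ∈ (Finset.univ : Finset (Fin n)),
      ⋃ S ∈ (Finset.powersetCard s Finset.univ).filter (fun S => v ∉ S),
      ⋃ R ∈ Finset.powersetCard r (Finset.powersetCard 2 ((Finset.univ \ S).erase v)),
      ⋃ I ∈ Fintype.piFinset (fun t => if t ∈ R then Finset.powersetCard i S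
          else ({∅} : Finset (Finset (Fin n)))),
      cylEvent (cylF v R I) := by
  intro ω hω
  obtain ⟨v, S, hvS, hScard, hcard⟩ := hω
  set T₀ := (Finset.powersetCard 2 (Finset.univ \ S)).filter (fun t =>
      memH (hedges ω) (insert v t) ∧
      ∃ y ∈ t, ∃ z ∈ t, y ≠ z ∧ i ≤ codeg (hedges ω) S y z) with hT₀
  obtain ⟨R, hRT, hRcard⟩ := Finset.exists_subset_card_eq hcard.le
  -- facts about t ∈ R
  have hRfacts : ∀ t ∈ R, t.card = 2 ∧ t ⊆ Finset.univ \ S ∧ v ∉ t ∧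
      memH (hedges ω) (insert v t) ∧
      ∃ y ∈ t, ∃ z ∈ t, y ≠ z ∧ i ≤ codeg (hedges ω) S y z := by
    intro t ht
    have := hRT ht
    rw [hT₀, Finset.mem_filter, Finset.mem_powersetCard] at this
    obtain ⟨⟨hsub, hc2⟩, hmem, hyz⟩ := this
    refine ⟨hc2, hsub, ?_, hmem, hyz⟩
    intro hv
    obtain ⟨e, -, he⟩ := hmem
    have : (insert v t).card = t.card := by rw [Finset.insert_eq_self.mpr hv]
    rw [← he, e.2, hc2] at this
    omega
  -- choose the witnessing i-sets
  have hJ : ∀ t ∈ R, ∃ J : Finset (Fin n), J ⊆ S ∧ J.card = i ∧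
      ∀ x ∈ J, memH (hedges ω) (insert x t) := by
    intro t ht
    obtain ⟨hc2, -, -, -, y, hy, z, hz, hyz, hcodeg⟩ := hRfacts t ht
    rw [codeg] at hcodeg
    obtain ⟨J, hJsub, hJcard⟩ := Finset.exists_subset_card_eq hcodeg
    refine ⟨J, (fun x hx => (Finset.mem_filter.mp (hJsub hx)).1), hJcard, ?_⟩
    intro x hx
    have hmem := (Finset.mem_filter.mp (hJsub hx)).2
    have hteq : t = {y, z} := by
      refine (Finset.eq_of_subset_of_card_le ?_ ?_).symm
      · intro a ha
        rcases Finset.mem_insert.mp ha with h | h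
        · exact h ▸ hy
        · exact (Finset.mem_singleton.mp h) ▸ hz
      · rw [hc2, Finset.card_insert_of_notMem (by simp [hyz]), Finset.card_singleton]
    have : insert x t = {y, z, x} := by
      rw [hteq]; ext a; simp; tauto
    rw [this]
    exact hmem
  choose! J hJ1 hJ2 hJ3 using hJ
  set I : Finset (Fin n) → Finset (Fin n) := fun t => if t ∈ R then J t else ∅ with hIdef
  simp only [Set.mem_iUnion]
  refine ⟨v, Finset.mem_univ v, S, ?_, R, ?_, I, ?_, ?_⟩
  · rw [Finset.mem_filter, Finset.mem_powersetCard]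
    exact ⟨⟨Finset.subset_univ S, hScard⟩, hvS⟩
  · rw [Finset.mem_powersetCard]
    refine ⟨?_, hRcard⟩
    intro t ht
    obtain ⟨hc2, hsub, hvt, -, -⟩ := hRfacts t ht
    rw [Finset.mem_powersetCard]
    exact ⟨fun a ha => Finset.mem_erase.mpr ⟨fun h => hvt (h ▸ ha), hsub ha⟩, hc2⟩
  · rw [Fintype.mem_piFinset]
    intro t
    rw [hIdef]
    by_cases ht : t ∈ R
    · simp only [ht, if_pos]
      rw [Finset.mem_powersetCard]
      exact ⟨hJ1 t ht, hJ2 t ht⟩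
    · simp [ht]
  · -- ω ∈ cylEvent
    intro e he
    rw [cylF, Finset.mem_union] at he
    have key : memH (hedges ω) (e : Finset (Fin n)) → ω e = true := by
      rintro ⟨e', he', hee⟩
      have : e' = e := Subtype.ext hee
      subst this
      exact (Finset.mem_filter.mp he').2
    rcases he with he | he
    · obtain ⟨t, ht, hte⟩ := Finset.mem_image.mp he
      exact key (hte ▸ (hRfacts t ht).2.2.2.1)
    · obtain ⟨t, ht, hx⟩ := Finset.mem_biUnion.mp he
      obtain ⟨x, hxI, hte⟩ := Finset.mem_image.mp hx
      rw [hIdef] at hxI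
      simp only [ht, if_pos] at hxI
      exact key (hte ▸ hJ3 t ht x hxI)
end Incl


theorem stmt6_main (n : ℕ) (p : ℝ) (hp0 : 0 ≤ p) (hp1 : p ≤ 1) (s r i : ℕ)
    (E : Set (Edge n → Bool))
    (hsub : E ⊆ ⋃ v ∈ (Finset.univ : Finset (Fin n)),
      ⋃ S ∈ (Finset.powersetCard s Finset.univ).filter (fun S => v ∉ S),
      ⋃ R ∈ Finset.powersetCard r (Finset.powersetCard 2 ((Finset.univ \ S).erase v)),
      ⋃ I ∈ Fintype.piFinset (fun t => if t ∈ R then Finset.powersetCard i S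
          else ({∅} : Finset (Finset (Fin n)))),
      cylEvent (cylF v R I)) :
    hypM n p E ≤ ENNReal.ofReal (gbound n p s r i) := by
  classical
  set c : ENNReal := ENNReal.ofReal p ^ (r + r * i) with hc
  -- per-index facts
  have hterm : ∀ v : Fin n,
      ∀ S ∈ (Finset.powersetCard s Finset.univ).filter (fun S => v ∉ S),
      ∀ R ∈ Finset.powersetCard r (Finset.powersetCard 2 ((Finset.univ \ S).erase v)),
      ∀ I ∈ Fintype.piFinset (fun t => if t ∈ R then Finset.powersetCard i S
          else ({∅} : Finset (Finset (Fin n)))),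
      hypM n p (cylEvent (cylF v R I)) = c := by
    intro v S hS R hR I hI
    rw [Finset.mem_filter, Finset.mem_powersetCard] at hS
    obtain ⟨⟨-, hScard⟩, hvS⟩ := hS
    rw [Finset.mem_powersetCard] at hR
    obtain ⟨hRsub, hRcard⟩ := hR
    have hRfacts : ∀ t ∈ R, t.card = 2 ∧ v ∉ t ∧ ∀ a ∈ t, a ∉ S := by
      intro t ht
      have := hRsub ht
      rw [Finset.mem_powersetCard] at this
      obtain ⟨hts, htc⟩ := this
      refine ⟨htc, fun hv => ?_, fun a ha => ?_⟩
      · exact (Finset.mem_erase.mp (hts hv)).1 rfl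
      · exact (Finset.mem_sdiff.mp (Finset.mem_of_mem_erase (hts ha))).2
    rw [Fintype.mem_piFinset] at hI
    have hIfacts : ∀ t ∈ R, I t ⊆ S ∧ (I t).card = i := by
      intro t ht
      have := hI t
      rw [if_pos ht, Finset.mem_powersetCard] at this
      exact this
    rw [cyl_meas n p hp0 hp1,
      card_filter_edge _ (card_three hvS hRfacts (fun t ht => (hIfacts t ht).1)),
      card_cylF hvS hRfacts hIfacts hRcard]
  -- counting bounds
  have hpiCard : ∀ (S : Finset (Fin n)), S.card = s → ∀ R : Finset (Finset (Fin n)),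
      R.card = r →
      (Fintype.piFinset (fun t => if t ∈ R then Finset.powersetCard i S
          else ({∅} : Finset (Finset (Fin n))))).card = (s.choose i) ^ r := by
    intro S hS R hRc
    rw [Fintype.card_piFinset]
    have : ∀ t : Finset (Fin n),
        (if t ∈ R then Finset.powersetCard i S else ({∅} : Finset (Finset (Fin n)))).card
          = if t ∈ R then s.choose i else 1 := by
      intro t
      split_ifs with ht
      · rw [Finset.card_powersetCard, hS]
      · simp
    rw [Finset.prod_congr rfl (fun t _ => this t), Finset.prod_ite_mem, Finset.univ_inter,
      Finset.prod_const, hRc]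
  calc hypM n p E
      ≤ ∑ v ∈ (Finset.univ : Finset (Fin n)),
          ∑ S ∈ (Finset.powersetCard s Finset.univ).filter (fun S => v ∉ S),
          ∑ R ∈ Finset.powersetCard r (Finset.powersetCard 2 ((Finset.univ \ S).erase v)),
          ∑ I ∈ Fintype.piFinset (fun t => if t ∈ R then Finset.powersetCard i S
              else ({∅} : Finset (Finset (Fin n)))),
          hypM n p (cylEvent (cylF v R I)) := by
        refine le_trans (measure_mono hsub) ?_
        refine le_trans (measure_biUnion_finset_le _ _) (Finset.sum_le_sum fun v _ => ?_)
        refine le_trans (measure_biUnion_finset_le _ _) (Finset.sum_le_sum fun S _ => ?_)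
        refine le_trans (measure_biUnion_finset_le _ _) (Finset.sum_le_sum fun R _ => ?_)
        exact measure_biUnion_finset_le _ _
    _ ≤ (n : ENNReal) * (n.choose s) * ((n ^ 2).choose r) * ((s.choose i) ^ r) * c := by
        have step : ∀ v : Fin n,
            ∑ S ∈ (Finset.powersetCard s Finset.univ).filter (fun S => v ∉ S),
            ∑ R ∈ Finset.powersetCard r (Finset.powersetCard 2 ((Finset.univ \ S).erase v)),
            ∑ I ∈ Fintype.piFinset (fun t => if t ∈ R then Finset.powersetCard i S
                else ({∅} : Finset (Finset (Fin n)))),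
            hypM n p (cylEvent (cylF v R I))
            ≤ (n.choose s : ENNReal) * ((n ^ 2).choose r) * ((s.choose i) ^ r) * c := by
          intro v
          have innerle : ∀ S ∈ (Finset.powersetCard s Finset.univ).filter (fun S => v ∉ S),
              ∑ R ∈ Finset.powersetCard r (Finset.powersetCard 2 ((Finset.univ \ S).erase v)),
              ∑ I ∈ Fintype.piFinset (fun t => if t ∈ R then Finset.powersetCard i S
                  else ({∅} : Finset (Finset (Fin n)))),
              hypM n p (cylEvent (cylF v R I))
              ≤ ((n ^ 2).choose r : ENNReal) * ((s.choose i) ^ r) * c := by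
            intro S hS
            have hScard : S.card = s := by
              rw [Finset.mem_filter, Finset.mem_powersetCard] at hS
              exact hS.1.2
            have hRle : ∀ R ∈ Finset.powersetCard r
                (Finset.powersetCard 2 ((Finset.univ \ S).erase v)),
                ∑ I ∈ Fintype.piFinset (fun t => if t ∈ R then Finset.powersetCard i S
                    else ({∅} : Finset (Finset (Fin n)))),
                hypM n p (cylEvent (cylF v R I)) = ((s.choose i : ENNReal) ^ r) * c := by
              intro R hR
              have hRcard : R.card = r := (Finset.mem_powersetCard.mp hR).2
              rw [Finset.sum_congr rfl (fun I hI => hterm v S hS R hR I hI),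
                Finset.sum_const, hpiCard S hScard R hRcard, nsmul_eq_mul]
              push_cast
              ring
            rw [Finset.sum_congr rfl hRle, Finset.sum_const, nsmul_eq_mul]
            rw [Finset.card_powersetCard]
            have hchoose : ((Finset.powersetCard 2 ((Finset.univ \ S).erase v)).card).choose r
                ≤ (n ^ 2).choose r := by
              apply Nat.choose_le_choose
              rw [Finset.card_powersetCard]
              calc ((Finset.univ \ S).erase v).card.choose 2
                  ≤ n.choose 2 := Nat.choose_le_choose 2 (le_trans (Finset.card_le_univ _)
                    (by simp))
                _ ≤ n ^ 2 := by
                    rw [Nat.choose_two_right, pow_two]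
                    calc n * (n - 1) / 2 ≤ n * (n-1) := Nat.div_le_self _ _
                      _ ≤ n * n := Nat.mul_le_mul_left n (Nat.sub_le n 1)
            calc (((Finset.powersetCard 2 ((Finset.univ \ S).erase v)).card).choose r : ENNReal)
                  * ((s.choose i : ENNReal) ^ r * c)
                ≤ ((n ^ 2).choose r : ENNReal) * ((s.choose i : ENNReal) ^ r * c) := by
                  gcongr

              _ = ((n ^ 2).choose r : ENNReal) * ((s.choose i) ^ r) * c := by push_cast; ring
          calc ∑ S ∈ (Finset.powersetCard s Finset.univ).filter (fun S => v ∉ S), _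
              ≤ ∑ S ∈ (Finset.powersetCard s Finset.univ).filter (fun S => v ∉ S),
                  ((n ^ 2).choose r : ENNReal) * ((s.choose i) ^ r) * c :=
                Finset.sum_le_sum innerle
            _ ≤ (n.choose s : ENNReal) * (((n ^ 2).choose r : ENNReal) * ((s.choose i) ^ r) * c) := by
                rw [Finset.sum_const, nsmul_eq_mul]
                gcongr
                exact le_trans (Finset.card_filter_le _ _)
                  (by rw [Finset.card_powersetCard, Finset.card_univ, Fintype.card_fin])
            _ = (n.choose s : ENNReal) * ((n ^ 2).choose r) * ((s.choose i) ^ r) * c := by ring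
        calc ∑ v ∈ (Finset.univ : Finset (Fin n)), _
            ≤ ∑ _v ∈ (Finset.univ : Finset (Fin n)),
                (n.choose s : ENNReal) * ((n ^ 2).choose r) * ((s.choose i) ^ r) * c :=
              Finset.sum_le_sum (fun v _ => step v)
          _ = (n : ENNReal) * (n.choose s) * ((n ^ 2).choose r) * ((s.choose i) ^ r) * c := by
              rw [Finset.sum_const, nsmul_eq_mul]
              simp [Finset.card_univ]
              ring
    _ ≤ ENNReal.ofReal (gbound n p s r i) := by
        have : ENNReal.ofReal (gbound n p s r i)
            = (n : ENNReal) * (n.choose s) * ((n ^ 2).choose r) *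
              (ENNReal.ofReal p * (s.choose i) * ENNReal.ofReal p ^ i) ^ r := by
          rw [gbound, ENNReal.ofReal_mul (by positivity), ENNReal.ofReal_mul (by positivity),
            ENNReal.ofReal_mul (by positivity), ENNReal.ofReal_pow (by positivity),
            ENNReal.ofReal_mul (by positivity), ENNReal.ofReal_mul hp0,
            ENNReal.ofReal_pow hp0, ENNReal.ofReal_natCast, ENNReal.ofReal_natCast,
            ENNReal.ofReal_natCast, ENNReal.ofReal_natCast]
        rw [this, hc]
        apply le_of_eq
        push_cast
        rw [pow_add, pow_mul]
        ring


theorem stmt_6 (n : ℕ) (p : ℝ) (hp0 : 0 ≤ p) (hp1 : p ≤ 1)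
    (s r i : ℕ) (hs : 0 < s) (hr : 0 < r) (hi : 0 < i)
    (hsn : s ≤ n) (hrn : r ≤ n.choose 2) (hin : i ≤ n) :
    hypM n p {ω : Edge n → Bool | ∃ v : Fin n, ∃ S : Finset (Fin n),
        v ∉ S ∧ S.card = s ∧
        r < ((Finset.powersetCard 2 (Finset.univ \ S)).filter fun t =>
              memH (hedges ω) (insert v t) ∧
              ∃ y ∈ t, ∃ z ∈ t, y ≠ z ∧ i ≤ codeg (hedges ω) S y z).card}
      ≤ ENNReal.ofReal (gbound n p s r i) := by
  exact stmt6_main n p hp0 hp1 s r i _ (incl p s r i)
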